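/- arXiv:1107.5537 — 6 statements merged into one kernel-verified Lean document; each statement's English description precedes it below -/
import Mathlib

section
/- Let (a_i) be a sequence in [0,1] with limsup_{n→∞} (1/n) ∑_{i=1}^n a_i = ε > 0, and define the indicator sequence α_i = 1 if a_i ≥ ε/4 and α_i = 0 otherwise. Then the infinite product ∏_{i=1}^∞ (1 − α_i/i) = 0. -/
open Filter Finset

theorem stmt1 (a : ℕ → ℝ) (ε : ℝ) (hε : 0 < ε)
    (hbound : ∀ i, a i ∈ Set.Icc (0 : ℝ) 1)
    (hlimsup : Filter.limsup (fun n => (∑ i ∈ Finset.Icc 1 n, a i) / n) Filter.atTop = ε)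
    (α : ℕ → ℝ) (hα : ∀ i, α i = if ε / 4 ≤ a i then 1 else 0) :
    Filter.Tendsto (fun N => ∏ i ∈ Finset.Icc 1 N, (1 - α i / i)) Filter.atTop (nhds 0) := by
  have hα0 : ∀ i, 0 ≤ α i := by intro i; rw [hα i]; split <;> norm_num
  have hα1 : ∀ i, α i ≤ 1 := by intro i; rw [hα i]; split <;> norm_num
  set c := ε / 4 with hcdef
  have hc : 0 < c := by positivity
  set S : ℕ → ℝ := fun N => ∑ i ∈ Finset.Icc 1 N, α i / i with hSdef
  have hSmono : Monotone S := by
    intro m n hmn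
    apply Finset.sum_le_sum_of_subset_of_nonneg (Finset.Icc_subset_Icc_right hmn)
    intro i _ _
    exact div_nonneg (hα0 i) (Nat.cast_nonneg i)
  -- frequently good n
  have hfreq : ∃ᶠ n in atTop, c * n < ∑ i ∈ Finset.Icc 1 n, α i := by
    have h1 : ∃ᶠ n in atTop, ε / 2 < (∑ i ∈ Finset.Icc 1 n, a i) / n := by
      apply Filter.frequently_lt_of_lt_limsup
      · exact Filter.isCoboundedUnder_le_of_le atTop (x := 0) fun n =>
          div_nonneg (Finset.sum_nonneg fun i _ => (hbound i).1) (Nat.cast_nonneg n)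
      · rw [hlimsup]; linarith
    refine h1.mono fun n hn => ?_
    have hn0 : n ≠ 0 := by
      rintro rfl
      simp at hn
      linarith
    have hnp : (0 : ℝ) < n := by
      exact_mod_cast Nat.pos_of_ne_zero hn0
    have hsum : ε / 2 * n < ∑ i ∈ Finset.Icc 1 n, a i := by
      rw [lt_div_iff₀ hnp] at hn
      linarith
    have hle : ∑ i ∈ Finset.Icc 1 n, a i ≤ (∑ i ∈ Finset.Icc 1 n, α i) + n * (ε / 4) := by
      have h2 : ∀ i ∈ Finset.Icc 1 n, a i ≤ α i + ε / 4 := by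
        intro i _
        rw [hα i]
        split_ifs with h
        · linarith [(hbound i).2]
        · push_neg at h; linarith [hcdef]
      calc ∑ i ∈ Finset.Icc 1 n, a i ≤ ∑ i ∈ Finset.Icc 1 n, (α i + ε / 4) :=
            Finset.sum_le_sum h2
        _ = (∑ i ∈ Finset.Icc 1 n, α i) + n * (ε / 4) := by
            rw [Finset.sum_add_distrib, Finset.sum_const, Nat.card_Icc]
            simp [nsmul_eq_mul]
    rw [hcdef]
    linarith
  -- sum over Icc 1 N of α is at most N
  have hsumle : ∀ N : ℕ, ∑ i ∈ Finset.Icc 1 N, α i ≤ N := by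
    intro N
    calc ∑ i ∈ Finset.Icc 1 N, α i ≤ ∑ i ∈ Finset.Icc 1 N, (1 : ℝ) :=
          Finset.sum_le_sum fun i _ => hα1 i
      _ = N := by rw [Finset.sum_const, Nat.card_Icc]; simp
  -- unboundedness
  have hstep : ∀ k : ℕ, ∃ N, (k : ℝ) * (c / 2) ≤ S N := by
    intro k
    induction k with
    | zero =>
      exact ⟨0, by simp [hSdef]⟩
    | succ k ih =>
      obtain ⟨N, hN⟩ := ih
      obtain ⟨n, hn1, hn2⟩ := (hfreq.and_eventually
        (eventually_ge_atTop (max (N + 1) ⌈2 * (N : ℝ) / c⌉₊))).exists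
      have hnN : N + 1 ≤ n := le_trans (le_max_left _ _) hn2
      have hnc : 2 * (N : ℝ) / c ≤ n := by
        refine le_trans (Nat.le_ceil _) ?_
        exact_mod_cast le_trans (le_max_right _ _) hn2
      have hnp : (0 : ℝ) < n := by
        have : 0 < n := by omega
        exact_mod_cast this
      have hNn : (N : ℝ) ≤ c / 2 * n := by
        rw [div_le_iff₀ hc] at hnc
        nlinarith
    -- S n - S N
      have hsplit : S N + ∑ i ∈ Finset.Ioc N n, α i / i = S n := by
        have h0N : 0 ≤ N := Nat.zero_le N
        have hNn' : N ≤ n := by omega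
        rw [hSdef]
        simp only []
        rw [show Finset.Icc 1 N = Finset.Ioc 0 N from rfl,
            show Finset.Icc 1 n = Finset.Ioc 0 n from rfl]
        exact Finset.sum_Ioc_consecutive _ h0N hNn'
      have htail : (c * n - N) / n ≤ ∑ i ∈ Finset.Ioc N n, α i / i := by
        have h1 : ∀ i ∈ Finset.Ioc N n, α i / n ≤ α i / i := by
          intro i hi
          simp only [Finset.mem_Ioc] at hi
          have hip : (0 : ℝ) < i := by
            have : 0 < i := by omega
            exact_mod_cast this
          exact div_le_div_of_nonneg_left (hα0 i) hip (by exact_mod_cast hi.2)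
        calc (c * n - N) / n ≤ (∑ i ∈ Finset.Ioc N n, α i) / n := by
              apply div_le_div_of_nonneg_right ?_ hnp.le
              have hsplit2 : (∑ i ∈ Finset.Icc 1 N, α i) + ∑ i ∈ Finset.Ioc N n, α i =
                  ∑ i ∈ Finset.Icc 1 n, α i := by
                rw [show Finset.Icc 1 N = Finset.Ioc 0 N from rfl,
                    show Finset.Icc 1 n = Finset.Ioc 0 n from rfl]
                exact Finset.sum_Ioc_consecutive _ (Nat.zero_le N) (by omega)
              have := hsumle N
              linarith
          _ = ∑ i ∈ Finset.Ioc N n, α i / n := Finset.sum_div _ _ _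
          _ ≤ ∑ i ∈ Finset.Ioc N n, α i / i := Finset.sum_le_sum h1
      have hq : c / 2 ≤ (c * n - N) / n := by
        rw [le_div_iff₀ hnp]
        nlinarith
      refine ⟨n, ?_⟩
      have : S N + c / 2 ≤ S n := by
        rw [← hsplit]
        linarith
      push_cast
      linarith
  have hunb : ∀ K : ℝ, ∃ N, K ≤ S N := by
    intro K
    obtain ⟨k, hk⟩ := exists_nat_ge (K / (c / 2))
    obtain ⟨N, hN⟩ := hstep k
    refine ⟨N, ?_⟩
    have : K ≤ (k : ℝ) * (c / 2) := by
      rw [div_le_iff₀ (by positivity)] at hk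
      linarith
    linarith
  have hStop : Tendsto S atTop atTop :=
    tendsto_atTop_atTop_of_monotone hSmono hunb
  -- squeeze
  have hfac : ∀ N, ∀ i ∈ Finset.Icc 1 N, (0 : ℝ) ≤ 1 - α i / i := by
    intro N i hi
    simp only [Finset.mem_Icc] at hi
    have hip : (0 : ℝ) < i := by
      have : 0 < i := by omega
      exact_mod_cast hi.1
    have : α i / i ≤ 1 := by
      rw [div_le_one hip]
      calc α i ≤ 1 := hα1 i
        _ ≤ i := by exact_mod_cast hi.1
    linarith
  have hupper : ∀ N, ∏ i ∈ Finset.Icc 1 N, (1 - α i / i) ≤ Real.exp (-(S N)) := by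
    intro N
    have h1 : ∏ i ∈ Finset.Icc 1 N, (1 - α i / i) ≤
        ∏ i ∈ Finset.Icc 1 N, Real.exp (-(α i / i)) := by
      apply Finset.prod_le_prod (hfac N)
      intro i _
      linarith [Real.add_one_le_exp (-(α i / i))]
    calc ∏ i ∈ Finset.Icc 1 N, (1 - α i / i) ≤
          ∏ i ∈ Finset.Icc 1 N, Real.exp (-(α i / i)) := h1
      _ = Real.exp (∑ i ∈ Finset.Icc 1 N, -(α i / i)) := (Real.exp_sum _ _).symm
      _ = Real.exp (-(S N)) := by rw [Finset.sum_neg_distrib]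
  have hexp : Tendsto (fun N => Real.exp (-(S N))) atTop (nhds 0) :=
    Real.tendsto_exp_atBot.comp (tendsto_neg_atBot_iff.mpr hStop)
  exact tendsto_of_tendsto_of_tendsto_of_le_of_le tendsto_const_nhds hexp
    (fun N => Finset.prod_nonneg (hfac N)) hupper
end

section
/- If (a_i) is a sequence in [0,1] with limsup_{n→∞} (1/n) ∑_{i=1}^n a_i = ε > 0, and α_i = 1 if a_i ≥ ε/4 (else 0), then ∑_{i=1}^∞ α_i/i = ∞ (the series diverges). -/
open Filter Finset

theorem stmt2 (a : ℕ → ℝ) (ε : ℝ) (hε : 0 < ε)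
    (hbound : ∀ i, a i ∈ Set.Icc (0 : ℝ) 1)
    (hlimsup : Filter.limsup (fun n => (∑ i ∈ Finset.Icc 1 n, a i) / n) Filter.atTop = ε)
    (α : ℕ → ℝ) (hα : ∀ i, α i = if ε / 4 ≤ a i then 1 else 0) :
    Filter.Tendsto (fun N => ∑ i ∈ Finset.Icc 1 N, α i / i) Filter.atTop Filter.atTop := by
  set T : ℕ → ℝ := fun N => ∑ i ∈ Finset.Icc 1 N, α i / i with hT
  have hα0 : ∀ i, 0 ≤ α i := by
    intro i; rw [hα]; split <;> norm_num
  have hα1 : ∀ i, α i ≤ 1 := by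
    intro i; rw [hα]; split <;> norm_num
  have hsplitgen : ∀ (g : ℕ → ℝ) (m n : ℕ), m ≤ n →
      ∑ i ∈ Finset.Icc 1 n, g i
        = (∑ i ∈ Finset.Icc 1 m, g i) + ∑ i ∈ Finset.Icc (m + 1) n, g i := by
    intro g m n hmn
    have hu : Finset.Icc 1 n = Finset.Icc 1 m ∪ Finset.Icc (m + 1) n := by
      ext i
      simp only [Finset.mem_Icc, Finset.mem_union]
      omega
    rw [hu, Finset.sum_union]
    rw [Finset.disjoint_left]
    intro i hi hi'
    simp only [Finset.mem_Icc] at hi hi'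
    omega
  have hTmono : Monotone T := by
    intro m n hmn
    apply Finset.sum_le_sum_of_subset_of_nonneg (Finset.Icc_subset_Icc_right hmn)
    intro i _ _
    exact div_nonneg (hα0 i) (Nat.cast_nonneg i)
  -- frequently the average exceeds ε/2
  have hfreq : ∃ᶠ n in atTop, ε / 2 < (∑ i ∈ Finset.Icc 1 n, a i) / n := by
    apply frequently_lt_of_lt_limsup
    · exact isCoboundedUnder_le_of_le atTop (x := (0:ℝ)) (fun n =>
        div_nonneg (Finset.sum_nonneg fun i _ => (hbound i).1) (Nat.cast_nonneg n))
    · rw [hlimsup]; linarith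
  -- key step
  have key : ∀ M : ℕ, ∃ n, M < n ∧ T M + ε / 8 ≤ T n := by
    intro M
    obtain ⟨n, hn, havg⟩ := (frequently_atTop.mp hfreq)
      (max (M + 1) (⌈(8 * (M:ℝ)) / ε⌉₊ + 1))
    have hnM : M < n := lt_of_lt_of_le (Nat.lt_succ_self M)
      (le_trans (le_max_left _ _) hn)
    have hn1 : 1 ≤ n := by omega
    have hnpos : (0:ℝ) < n := by exact_mod_cast Nat.lt_of_lt_of_le Nat.zero_lt_one hn1
    have hnceil : (8 * (M:ℝ)) / ε ≤ n := by
      have h1 : (⌈(8 * (M:ℝ)) / ε⌉₊ + 1 : ℕ) ≤ n := le_trans (le_max_right _ _) hn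
      calc (8 * (M:ℝ)) / ε ≤ ⌈(8 * (M:ℝ)) / ε⌉₊ := Nat.le_ceil _
        _ ≤ n := by exact_mod_cast le_trans (Nat.le_succ _) h1
    have hMn : (M:ℝ) / n ≤ ε / 8 := by
      rw [div_le_div_iff₀ hnpos (by norm_num : (0:ℝ) < 8)]
      have := (div_le_iff₀ hε).mp hnceil
      linarith
    -- sum of a exceeds ε/2 * n
    have hSa : ε / 2 * n < ∑ i ∈ Finset.Icc 1 n, a i := by
      rw [lt_div_iff₀ hnpos] at havg
      linarith
    -- pointwise a i ≤ α i + ε/4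
    have hpt : ∀ i, a i ≤ α i + ε / 4 := by
      intro i
      rw [hα]
      rcases le_or_gt (ε / 4) (a i) with h | h
      · simp only [if_pos h]
        have := (hbound i).2
        linarith
      · simp only [if_neg (not_le.mpr h)]
        linarith
    have hSα : ε / 4 * n ≤ ∑ i ∈ Finset.Icc 1 n, α i := by
      have hsum : ∑ i ∈ Finset.Icc 1 n, a i ≤
          (∑ i ∈ Finset.Icc 1 n, α i) + n * (ε / 4) := by
        calc ∑ i ∈ Finset.Icc 1 n, a i ≤ ∑ i ∈ Finset.Icc 1 n, (α i + ε / 4) :=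
              Finset.sum_le_sum (fun i _ => hpt i)
          _ = (∑ i ∈ Finset.Icc 1 n, α i) + ((Finset.Icc 1 n).card : ℝ) * (ε / 4) := by
              rw [Finset.sum_add_distrib, Finset.sum_const, nsmul_eq_mul]
          _ = (∑ i ∈ Finset.Icc 1 n, α i) + n * (ε / 4) := by
              rw [Nat.card_Icc, Nat.add_sub_cancel]
      linarith
    have hSαM : ∑ i ∈ Finset.Icc 1 M, α i ≤ M := by
      calc ∑ i ∈ Finset.Icc 1 M, α i ≤ ∑ i ∈ Finset.Icc 1 M, (1:ℝ) :=
            Finset.sum_le_sum (fun i _ => hα1 i)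
        _ = M := by
            rw [Finset.sum_const, Nat.card_Icc, Nat.add_sub_cancel, nsmul_eq_mul, mul_one]
    refine ⟨n, hnM, ?_⟩
    have hsplit : T n = T M + ∑ i ∈ Finset.Icc (M + 1) n, α i / i :=
      hsplitgen (fun i => α i / i) M n (le_of_lt hnM)
    have hlow : (ε / 4 * n - M) / n ≤ ∑ i ∈ Finset.Icc (M + 1) n, α i / i := by
      calc (ε / 4 * n - M) / n ≤ (∑ i ∈ Finset.Icc (M + 1) n, α i) / n := by
            gcongr
            have h2 : ∑ i ∈ Finset.Icc (M+1) n, α i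
                = (∑ i ∈ Finset.Icc 1 n, α i) - ∑ i ∈ Finset.Icc 1 M, α i := by
              have := hsplitgen α M n (le_of_lt hnM)
              linarith
            rw [h2]
            linarith
        _ = ∑ i ∈ Finset.Icc (M + 1) n, α i / n := by rw [Finset.sum_div]
        _ ≤ ∑ i ∈ Finset.Icc (M + 1) n, α i / i := by
            apply Finset.sum_le_sum
            intro i hi
            simp only [Finset.mem_Icc] at hi
            apply div_le_div_of_nonneg_left (hα0 i) _ (by exact_mod_cast hi.2)
            have : 0 < i := by omega
            exact_mod_cast this
    have hfin : ε / 8 ≤ (ε / 4 * n - M) / n := by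
      rw [le_div_iff₀ hnpos]
      have h8 : (M:ℝ) ≤ ε / 8 * n := by
        rw [div_le_iff₀ hnpos] at hMn
        linarith
      linarith
    rw [hsplit]
    linarith [le_trans hfin hlow]
  -- iterate
  choose f hf1 hf2 using key
  have hiter : ∀ k : ℕ, (k : ℝ) * (ε / 8) ≤ T (f^[k] 0) := by
    intro k
    induction k with
    | zero => simp [hT]
    | succ k ih =>
        rw [Function.iterate_succ_apply']
        push_cast
        have := hf2 (f^[k] 0)
        linarith
  apply tendsto_atTop_atTop_of_monotone hTmono
  intro b
  obtain ⟨k, hk⟩ := exists_nat_ge (b / (ε / 8))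
  refine ⟨f^[k] 0, ?_⟩
  have h8 : (0:ℝ) < ε / 8 := by linarith
  have hb : b ≤ (k:ℝ) * (ε / 8) := by
    rw [div_le_iff₀ h8] at hk
    linarith
  linarith [hiter k]
end

section
/- Let γ_k = 1/(k(k+1)) (so Γ_t = 1/t). Fix t_i ≥ 1 and ε ∈ (0, 1/2). If a reward sequence satisfies r_k = 1/2 − ε for t ≤ k ≤ 2t_i and r_k ≤ 1/2 for k > 2t_i, then for any t with t_i ≤ t ≤ (3/2)t_i, the normalized discounted value (1/Γ_t)∑_{k=t}^∞ γ_k r_k is strictly less than 1/2 − ε/4. -/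
open Filter Topology

lemma gamma_nonneg (m k : ℕ) : (0:ℝ) ≤ 1 / (((m + k : ℕ) : ℝ) * ((m + k : ℕ) + 1)) := by
  positivity

lemma hasSum_gamma (m : ℕ) (hm : 1 ≤ m) :
    HasSum (fun k : ℕ => 1 / (((m + k : ℕ) : ℝ) * ((m + k : ℕ) + 1))) (1 / m) := by
  rw [hasSum_iff_tendsto_nat_of_nonneg (gamma_nonneg m)]
  have key : ∀ n : ℕ, ∑ i ∈ Finset.range n, (1 / (((m + i : ℕ) : ℝ) * ((m + i : ℕ) + 1)))
      = 1 / m - 1 / (m + n) := by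
    intro n
    induction n with
    | zero => simp
    | succ n ih =>
      rw [Finset.sum_range_succ, ih]
      have h1 : (0:ℝ) < (m:ℝ) + n := by
        have : (1:ℝ) ≤ (m:ℝ) := by exact_mod_cast hm
        positivity
      have h2 : (0:ℝ) < (m:ℝ) + n + 1 := by linarith
      push_cast
      field_simp
      ring
  simp only [key]
  have : Tendsto (fun n : ℕ => 1 / ((m:ℝ) + n)) atTop (𝓝 0) := by
    simp only [one_div]
    exact Tendsto.comp tendsto_inv_atTop_zero
      (tendsto_atTop_add_const_left _ _ tendsto_natCast_atTop_atTop)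
  simpa using tendsto_const_nhds.sub this

theorem stmt8 (ti : ℕ) (hti : 1 ≤ ti) (ε : ℝ) (hε0 : 0 < ε) (hε1 : ε < 1 / 2)
    (r : ℕ → ℝ) (hbound : ∀ k, r k ∈ Set.Icc (0 : ℝ) 1)
    (t : ℕ) (ht1 : ti ≤ t) (ht2 : 2 * t ≤ 3 * ti)
    (hr1 : ∀ k, t ≤ k → k ≤ 2 * ti → r k = 1 / 2 - ε)
    (hr2 : ∀ k, 2 * ti < k → r k ≤ 1 / 2) :
    (t : ℝ) * ∑' k : ℕ, (1 / (((t + k : ℕ) : ℝ) * ((t + k : ℕ) + 1))) * r (t + k)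
      < 1 / 2 - ε / 4 := by
  have ht : 1 ≤ t := le_trans hti ht1
  have htlt : t < 2 * ti + 1 := by omega
  set k0 : ℕ := 2 * ti + 1 - t with hk0
  have hk0t : t + k0 = 2 * ti + 1 := by omega
  set γ : ℕ → ℝ := fun k => 1 / (((t + k : ℕ) : ℝ) * ((t + k : ℕ) + 1)) with hγ
  have hγnn : ∀ k, 0 ≤ γ k := gamma_nonneg t
  -- the comparison function
  set g : ℕ → ℝ := fun k => γ k * (1/2 - ε) + (if k0 ≤ k then ε * γ k else 0) with hg
  -- HasSum of tail indicator
  have htail : HasSum (fun k => if k0 ≤ k then γ k else 0) (1 / (2 * ti + 1 : ℕ)) := by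
    rw [← hasSum_nat_add_iff' k0]
    have : ∀ i ∈ Finset.range k0, (if k0 ≤ i then γ i else 0) = 0 := by
      intro i hi
      simp only [Finset.mem_range] at hi
      rw [if_neg (by omega)]
    rw [Finset.sum_eq_zero this, sub_zero]
    have := hasSum_gamma (2 * ti + 1) (by omega)
    convert this using 2 with n
    case e'_3 => rfl
    rw [if_pos (by omega)]
    simp only [hγ]
    congr 2 <;> · norm_cast; omega
  have hΓ : HasSum γ (1 / t) := hasSum_gamma t ht
  have hgsum : HasSum g ((1 / t) * (1/2 - ε) + ε * (1 / (2 * ti + 1 : ℕ))) := by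
    apply (hΓ.mul_right _).add
    have := htail.mul_left ε
    convert this using 2 with n
    split <;> simp [mul_comm]
  -- f ≤ g pointwise, f summable
  have hf_le : ∀ k, γ k * r (t + k) ≤ g k := by
    intro k
    rcases le_or_gt k0 k with h | h
    · have : r (t + k) ≤ 1 / 2 := hr2 _ (by omega)
      simp only [hg, if_pos h]
      have := hγnn k
      nlinarith
    · have : r (t + k) = 1 / 2 - ε := hr1 _ (by omega) (by omega)
      simp only [hg, if_neg (not_le.mpr h), this, add_zero]
      exact le_refl _
  have hfsumm : Summable (fun k => γ k * r (t + k)) := by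
    apply Summable.of_nonneg_of_le (fun k => mul_nonneg (hγnn k) (hbound (t+k)).1)
      (fun k => ?_) hΓ.summable
    calc γ k * r (t + k) ≤ γ k * 1 := by
          exact mul_le_mul_of_nonneg_left (hbound (t+k)).2 (hγnn k)
      _ = γ k := mul_one _
  have hle : ∑' k, γ k * r (t + k) ≤ (1 / t) * (1/2 - ε) + ε * (1 / (2 * ti + 1 : ℕ)) := by
    rw [← hgsum.tsum_eq]
    exact Summable.tsum_le_tsum hf_le hfsumm hgsum.summable
  have htpos : (0:ℝ) < t := by exact_mod_cast ht
  calc (t : ℝ) * ∑' k, γ k * r (t + k)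
      ≤ (t : ℝ) * ((1 / t) * (1/2 - ε) + ε * (1 / (2 * ti + 1 : ℕ))) := by
        exact mul_le_mul_of_nonneg_left hle htpos.le
    _ < 1 / 2 - ε / 4 := by
        have h1 : (t:ℝ) * (1 / t) = 1 := by field_simp
        have h2 : (4:ℝ) * t < 3 * ((2 * ti : ℕ) + 1) := by
          push_cast; have : (2:ℝ) * t ≤ 3 * ti := by exact_mod_cast ht2
          linarith
        have h3 : (0:ℝ) < ((2 * ti + 1 : ℕ) : ℝ) := by positivity
        rw [mul_add, ← mul_assoc, h1, one_mul]
        have h4 : (t:ℝ) * (ε * (1 / ((2 * ti + 1 : ℕ) : ℝ))) < 3 * ε / 4 := by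
          have hx : (t:ℝ) / ((2*ti+1:ℕ):ℝ) < 3/4 := by
            rw [div_lt_div_iff₀ h3 (by norm_num)]
            push_cast at h2 ⊢; linarith
          calc (t:ℝ) * (ε * (1/((2*ti+1:ℕ):ℝ))) = ((t:ℝ)/((2*ti+1:ℕ):ℝ)) * ε := by ring
            _ < (3/4) * ε := by nlinarith
            _ = 3*ε/4 := by ring
        linarith
end

section
/- Approximation Lemma: Let γ be a regular discount function with tail sums Γ_t, let ε ∈ (0,1), and let h ≥ H_t(1−ε) where H_t(p) = min{h : (1/Γ_t)∑_{k=t}^{t+h} γ_k > p}. If two reward sequences (r_k), (r'_k) with values in [0,1] agree on all k ∈ [t, t+h], then |(1/Γ_t)∑_{k=t}^∞ γ_k r_k − (1/Γ_t)∑_{k=t}^∞ γ_k r'_k| < ε. -/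
open Filter Finset

/-- The effective horizon `H_t(p)`: the least `h` with `(1/Γ_t) ∑_{k=t}^{t+h} γ_k > p`,
where `Γ_t = ∑_{i≥t} γ_i`. -/
noncomputable def horizon (γ : ℕ → ℝ) (t : ℕ) (p : ℝ) : ℕ :=
  sInf {h : ℕ | p < (∑ k ∈ Finset.Icc t (t + h), γ k) / (∑' i : ℕ, γ (t + i))}

theorem stmt10 (γ : ℕ → ℝ) (hpos : ∀ k, 0 ≤ γ k) (hsum : Summable γ)
    (hΓ : ∀ s, 0 < ∑' i : ℕ, γ (s + i))
    (t : ℕ) (ε : ℝ) (hε0 : 0 < ε) (hε1 : ε < 1)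
    (h : ℕ) (hh : horizon γ t (1 - ε) ≤ h)
    (r r' : ℕ → ℝ)
    (hr : ∀ k, r k ∈ Set.Icc (0 : ℝ) 1) (hr' : ∀ k, r' k ∈ Set.Icc (0 : ℝ) 1)
    (hagree : ∀ k, t ≤ k → k ≤ t + h → r k = r' k) :
    |(∑' k : ℕ, γ (t + k) * r (t + k)) / (∑' i : ℕ, γ (t + i)) -
      (∑' k : ℕ, γ (t + k) * r' (t + k)) / (∑' i : ℕ, γ (t + i))| < ε := by
  set Γ : ℝ := ∑' i : ℕ, γ (t + i) with hΓdef
  have hΓpos : 0 < Γ := hΓ t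
  have hsumt : Summable (fun k : ℕ => γ (t + k)) :=
    hsum.comp_injective (add_right_injective t)
  -- reindexing of Icc sums
  have hre : ∀ n : ℕ, (∑ k ∈ Finset.Icc t (t + n), γ k)
      = ∑ k ∈ Finset.range (n + 1), γ (t + k) := by
    intro n
    induction n with
    | zero => simp
    | succ n ih =>
      rw [show t + (n + 1) = (t + n) + 1 by omega,
        Finset.sum_Icc_succ_top (by omega), ih, Finset.sum_range_succ]
      rw [Finset.sum_range_succ, Finset.sum_range_succ, show t + (n + 1) = t + n + 1 by omega]
  -- horizon set nonempty and h is in it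
  have hSne : {m : ℕ | 1 - ε < (∑ k ∈ Finset.Icc t (t + m), γ k) / Γ}.Nonempty := by
    have htend : Tendsto (fun n => ∑ k ∈ Finset.range n, γ (t + k)) atTop (nhds Γ) :=
      hsumt.hasSum.tendsto_sum_nat
    have hlt : (1 - ε) * Γ < Γ := by nlinarith
    have : ∀ᶠ n in atTop, (1 - ε) * Γ < ∑ k ∈ Finset.range n, γ (t + k) :=
      htend.eventually (eventually_gt_nhds hlt)
    obtain ⟨N, hN⟩ := this.exists
    refine ⟨N, ?_⟩
    simp only [Set.mem_setOf_eq]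
    rw [hre, lt_div_iff₀ hΓpos]
    refine lt_of_lt_of_le hN ?_
    apply Finset.sum_le_sum_of_subset_of_nonneg
    · exact Finset.range_subset_range.2 (Nat.le_succ N)
    · intro i _ _; exact hpos _
  have hmem : 1 - ε < (∑ k ∈ Finset.Icc t (t + h), γ k) / Γ := by
    have h0 := Nat.sInf_mem hSne
    have h0le : sInf {m : ℕ | 1 - ε < (∑ k ∈ Finset.Icc t (t + m), γ k) / Γ} ≤ h := hh
    set m := sInf {m : ℕ | 1 - ε < (∑ k ∈ Finset.Icc t (t + m), γ k) / Γ}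
    have hmono : (∑ k ∈ Finset.Icc t (t + m), γ k) ≤ ∑ k ∈ Finset.Icc t (t + h), γ k := by
      apply Finset.sum_le_sum_of_subset_of_nonneg
      · exact Finset.Icc_subset_Icc le_rfl (by omega)
      · intro i _ _; exact hpos _
    have := h0
    simp only [Set.mem_setOf_eq] at this
    calc 1 - ε < (∑ k ∈ Finset.Icc t (t + m), γ k) / Γ := this
      _ ≤ (∑ k ∈ Finset.Icc t (t + h), γ k) / Γ := by
          gcongr
  -- partial sum bound
  have hS : (1 - ε) * Γ < ∑ k ∈ Finset.range (h + 1), γ (t + k) := by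
    rw [← hre]
    exact (lt_div_iff₀ hΓpos).1 hmem
  -- summability of products
  have habs : ∀ (ρ : ℕ → ℝ), (∀ k, ρ k ∈ Set.Icc (0:ℝ) 1) →
      Summable (fun k : ℕ => γ (t + k) * ρ (t + k)) := by
    intro ρ hρ
    apply Summable.of_nonneg_of_le (fun k => mul_nonneg (hpos _) (hρ _).1)
      (fun k => ?_) hsumt
    calc γ (t + k) * ρ (t + k) ≤ γ (t + k) * 1 :=
          mul_le_mul_of_nonneg_left (hρ _).2 (hpos _)
      _ = γ (t + k) := mul_one _
  have hsr := habs r hr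
  have hsr' := habs r' hr'
  -- tail bound function
  set f : ℕ → ℝ := fun k => if k ≤ h then 0 else γ (t + k) with hf
  have hsf : Summable f := by
    apply Summable.of_nonneg_of_le (fun k => ?_) (fun k => ?_) hsumt
    · by_cases hk : k ≤ h <;> simp [hf, hk, hpos]
    · by_cases hk : k ≤ h <;> simp [hf, hk, hpos]
  have hftsum : ∑' k, f k = Γ - ∑ k ∈ Finset.range (h + 1), γ (t + k) := by
    have : (fun k : ℕ => γ (t + k)) = fun k => f k + (if k ≤ h then γ (t + k) else 0) := by
      funext k; by_cases hk : k ≤ h <;> simp [hf, hk]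
    have hsg : Summable (fun k : ℕ => if k ≤ h then γ (t + k) else 0) :=
      summable_of_finite_support (by
        apply Set.Finite.subset (Set.finite_Iic h)
        intro k hk
        simp only [Function.mem_support] at hk
        by_contra hc
        simp only [Set.mem_Iic, not_le] at hc
        simp [Nat.not_le.2 hc] at hk)
    have hgt : ∑' k, (if k ≤ h then γ (t + k) else 0) = ∑ k ∈ Finset.range (h + 1), γ (t + k) := by
      rw [tsum_eq_sum (s := Finset.range (h + 1)) (fun k hk => by
        simp only [Finset.mem_range, not_lt] at hk
        have : ¬ k ≤ h := by omega
        simp [this])]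
      apply Finset.sum_congr rfl
      intro k hk
      simp only [Finset.mem_range] at hk
      have : k ≤ h := by omega
      simp [this]
    have hΓsplit : Γ = ∑' k, f k + ∑' k, (if k ≤ h then γ (t + k) else 0) := by
      rw [hΓdef, this, Summable.tsum_add hsf hsg]
    rw [hgt] at hΓsplit
    linarith
  have hftail : ∑' k, f k < ε * Γ := by
    rw [hftsum]; nlinarith
  -- main bound
  have hdiff : (∑' k : ℕ, γ (t + k) * r (t + k)) - (∑' k : ℕ, γ (t + k) * r' (t + k))
      = ∑' k : ℕ, (γ (t + k) * r (t + k) - γ (t + k) * r' (t + k)) := (Summable.tsum_sub hsr hsr').symm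
  have hbound : |∑' k : ℕ, (γ (t + k) * r (t + k) - γ (t + k) * r' (t + k))| ≤ ∑' k, f k := by
    have hsd : Summable (fun k : ℕ => γ (t + k) * r (t + k) - γ (t + k) * r' (t + k)) :=
      hsr.sub hsr'
    calc |∑' k : ℕ, (γ (t + k) * r (t + k) - γ (t + k) * r' (t + k))|
        ≤ ∑' k : ℕ, |γ (t + k) * r (t + k) - γ (t + k) * r' (t + k)| := by
          have := norm_tsum_le_tsum_norm (f := fun k : ℕ => γ (t + k) * r (t + k) - γ (t + k) * r' (t + k)) (by simpa [Real.norm_eq_abs] using hsd.abs)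
          simpa [Real.norm_eq_abs] using this
      _ ≤ ∑' k, f k := by
          apply Summable.tsum_le_tsum (fun k => ?_) hsd.abs hsf
          by_cases hk : k ≤ h
          · have : r (t + k) = r' (t + k) := hagree (t + k) (by omega) (by omega)
            simp [hf, hk, this]
          · simp only [hf, hk, if_false]
            rw [← mul_sub, abs_mul, abs_of_nonneg (hpos _)]
            have h1 : |r (t + k) - r' (t + k)| ≤ 1 := by
              have := hr (t + k); have := hr' (t + k)
              rw [abs_le]; constructor <;> [linarith [(hr (t+k)).1, (hr' (t+k)).2];
                linarith [(hr (t+k)).2, (hr' (t+k)).1]]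
            calc γ (t + k) * |r (t + k) - r' (t + k)| ≤ γ (t + k) * 1 :=
                  mul_le_mul_of_nonneg_left h1 (hpos _)
              _ = γ (t + k) := mul_one _
  rw [div_sub_div_same, abs_div, abs_of_pos hΓpos, div_lt_iff₀ hΓpos]
  calc |(∑' k : ℕ, γ (t + k) * r (t + k)) - ∑' k : ℕ, γ (t + k) * r' (t + k)|
      = |∑' k : ℕ, (γ (t + k) * r (t + k) - γ (t + k) * r' (t + k))| := by rw [hdiff]
    _ ≤ ∑' k, f k := hbound
    _ < ε * Γ := hftail
end

section
/- Let χ ∈ {0,1}^∞ be a random sequence with independent bits where P(χ_n = 1) = 1/n. Fix h ∈ ℕ and define dotχ^h_k = 1 iff there exists i with χ_i = 1 and i ≤ j ≤ i + ⌈log i⌉ for some j ∈ [k, k+h] (i.e. an exploration burst of length log i starting at some i intersects [k, k+h]). Then with probability 1, limsup_{n→∞} (1/n) · #{k ≤ n : dotχ^h_k = 1} = 0. -/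
open Filter Finset MeasureTheory ProbabilityTheory
open scoped Classical

private noncomputable def mS {Ω : Type*} (χ : ℕ → Ω → Bool) (m : ℕ) (ω : Ω) : ℕ :=
  ((Finset.Icc 1 m).filter (fun i => χ i ω = true)).card

private lemma cover_bound {Ω : Type*} (χ : ℕ → Ω → Bool) (h : ℕ) (ω : Ω) (n : ℕ) :
    (((Finset.Icc 1 n).filter (fun k =>
      ∃ j, k ≤ j ∧ j ≤ k + h ∧ ∃ i, 1 ≤ i ∧ χ i ω = true ∧ i ≤ j ∧
        (j : ℝ) ≤ i + Real.log i)).card)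
      ≤ mS χ (n+h) ω * (Nat.floor (Real.log ((n+h : ℕ) : ℝ)) + h + 1) := by
  classical
  set L := Nat.floor (Real.log ((n+h : ℕ) : ℝ)) with hL
  have hsub : ((Finset.Icc 1 n).filter (fun k =>
      ∃ j, k ≤ j ∧ j ≤ k + h ∧ ∃ i, 1 ≤ i ∧ χ i ω = true ∧ i ≤ j ∧
        (j : ℝ) ≤ i + Real.log i))
      ⊆ ((Finset.Icc 1 (n+h)).filter (fun i => χ i ω = true)).biUnion
          (fun i => Finset.Icc (i - h) (i + L)) := by
    intro k hk
    rcases Finset.mem_filter.1 hk with ⟨hk1, j, hkj, hjk, i, hi1, hχ, hij, hji⟩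
    have hk1' := Finset.mem_Icc.1 hk1
    have hjn : j ≤ n + h := le_trans hjk (by omega)
    have hin : i ≤ n + h := le_trans hij hjn
    refine Finset.mem_biUnion.2 ⟨i, Finset.mem_filter.2 ⟨Finset.mem_Icc.2 ⟨hi1, hin⟩, hχ⟩, ?_⟩
    have hjiL : j - i ≤ Nat.floor (Real.log (i : ℝ)) := by
      apply Nat.le_floor
      rw [Nat.cast_sub hij]
      linarith
    have hLL : Nat.floor (Real.log (i : ℝ)) ≤ L := by
      apply Nat.floor_le_floor
      apply Real.log_le_log (by exact_mod_cast hi1)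
      exact_mod_cast hin
    exact Finset.mem_Icc.2 ⟨by omega, by omega⟩
  calc _ ≤ _ := Finset.card_le_card hsub
    _ ≤ ∑ i ∈ ((Finset.Icc 1 (n+h)).filter (fun i => χ i ω = true)),
          (Finset.Icc (i - h) (i + L)).card := Finset.card_biUnion_le
    _ ≤ ∑ _i ∈ ((Finset.Icc 1 (n+h)).filter (fun i => χ i ω = true)), (L + h + 1) := by
        apply Finset.sum_le_sum
        intro i _
        rw [Nat.card_Icc]
        omega
    _ = mS χ (n+h) ω * (L + h + 1) := by rw [Finset.sum_const, smul_eq_mul, mS]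

private lemma markov_bound {Ω : Type*} [MeasurableSpace Ω] (P : Measure Ω)
    [IsProbabilityMeasure P] (χ : ℕ → Ω → Bool) (hmeas : ∀ n, Measurable (χ n))
    (hp : ∀ n : ℕ, 1 ≤ n → P {ω | χ n ω = true} = ENNReal.ofReal (1 / n))
    (m a : ℕ) (ha : 0 < a) :
    P {ω | a ≤ mS χ m ω} ≤ ENNReal.ofReal ((1 + Real.log m) / a) := by
  classical
  set f : Ω → ENNReal := fun ω => ∑ i ∈ Finset.Icc 1 m, (if χ i ω = true then 1 else 0) with hf
  have hm1 : ∀ i, Measurable (fun ω => if χ i ω = true then (1:ENNReal) else 0) := by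
    intro i
    exact Measurable.ite ((hmeas i) (measurableSet_singleton true)) measurable_const
      measurable_const
  have hfmeas : Measurable f := Finset.measurable_sum _ (fun i _ => hm1 i)
  have hfS : ∀ ω, f ω = (mS χ m ω : ENNReal) := by
    intro ω
    rw [hf, mS, Finset.card_filter]
    push_cast
    rfl
  have hset : {ω | a ≤ mS χ m ω} = {ω | (a : ENNReal) ≤ f ω} := by
    ext ω; simp [hfS, Nat.cast_le]
  have hint : ∫⁻ ω, f ω ∂P ≤ ENNReal.ofReal (1 + Real.log m) := by
    rw [hf]
    rw [MeasureTheory.lintegral_finset_sum (Finset.Icc 1 m)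
      (f := fun i ω => if χ i ω = true then (1:ENNReal) else 0) (fun i _ => hm1 i)]
    have heq : ∀ i ∈ Finset.Icc 1 m,
        (∫⁻ ω, (if χ i ω = true then (1:ENNReal) else 0) ∂P) = ENNReal.ofReal (1 / i) := by
      intro i hi
      have hms : MeasurableSet {ω | χ i ω = true} := (hmeas i) (measurableSet_singleton true)
      have heq2 : (fun ω => if χ i ω = true then (1:ENNReal) else 0)
          = Set.indicator {ω | χ i ω = true} (1 : Ω → ENNReal) := by
        ext ω; simp [Set.indicator_apply]
      rw [heq2,
        show lintegral P (Set.indicator {ω | χ i ω = true} (1 : Ω → ENNReal))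
            = P {ω | χ i ω = true} from MeasureTheory.lintegral_indicator_one hms,
        hp i (Finset.mem_Icc.1 hi).1]
    rw [Finset.sum_congr rfl heq]
    have hsum : ∑ i ∈ Finset.Icc 1 m, ENNReal.ofReal (1 / (i:ℝ))
        = ENNReal.ofReal (∑ i ∈ Finset.Icc 1 m, 1 / (i:ℝ)) := by
      rw [ENNReal.ofReal_sum_of_nonneg]
      intro i _; positivity
    rw [hsum]
    apply ENNReal.ofReal_le_ofReal
    have : ∑ i ∈ Finset.Icc 1 m, 1 / (i:ℝ) = (harmonic m : ℝ) := by
      rw [harmonic_eq_sum_Icc]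
      push_cast
      simp [one_div]
    rw [this]
    exact harmonic_le_one_add_log m
  have hma : (a : ENNReal) ≠ 0 := by exact_mod_cast ha.ne'
  have hmark := MeasureTheory.meas_ge_le_lintegral_div (μ := P) hfmeas.aemeasurable hma
    (ENNReal.natCast_ne_top a)
  rw [hset]
  refine le_trans hmark ?_
  rw [ENNReal.div_le_iff hma (ENNReal.natCast_ne_top a)]
  calc ∫⁻ ω, f ω ∂P ≤ ENNReal.ofReal (1 + Real.log m) := hint
    _ ≤ _ := by
        rw [← ENNReal.ofReal_natCast a, ← ENNReal.ofReal_mul (by positivity)]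
        apply ENNReal.ofReal_le_ofReal
        rw [div_mul_cancel₀ _ (show (a:ℝ) ≠ 0 by exact_mod_cast ha.ne')]

private lemma bc_lemma {Ω : Type*} [MeasurableSpace Ω] (P : Measure Ω)
    [IsProbabilityMeasure P] (χ : ℕ → Ω → Bool) (hmeas : ∀ n, Measurable (χ n))
    (hp : ∀ n : ℕ, 1 ≤ n → P {ω | χ n ω = true} = ENNReal.ofReal (1 / n)) :
    ∀ᵐ ω ∂P, ∀ᶠ j in atTop, mS χ (2^j) ω < (j+1)^3 := by
  set s : ℕ → Set Ω := fun j => {ω | (j+1)^3 ≤ mS χ (2^j) ω} with hs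
  have hl2 : Real.log 2 ≤ 1 := by
    have := Real.log_two_lt_d9
    linarith
  have hb : ∀ j, P (s j) ≤ ENNReal.ofReal (1/((j:ℝ)+1)^2) := by
    intro j
    refine le_trans (markov_bound P χ hmeas hp (2^j) ((j+1)^3) (by positivity)) ?_
    apply ENNReal.ofReal_le_ofReal
    have hlog : Real.log (((2:ℕ)^j : ℕ) : ℝ) = (j:ℝ) * Real.log 2 := by
      push_cast
      rw [Real.log_pow]
    rw [hlog]
    have hnum : 1 + (j:ℝ) * Real.log 2 ≤ (j:ℝ) + 1 := by
      have : (j:ℝ) * Real.log 2 ≤ (j:ℝ) * 1 := by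
        apply mul_le_mul_of_nonneg_left hl2 (by positivity)
      linarith
    calc (1 + (j:ℝ) * Real.log 2) / (((j+1)^3 : ℕ) : ℝ)
        ≤ ((j:ℝ) + 1) / (((j:ℝ)+1)^3) := by
          push_cast
          gcongr
      _ = 1/((j:ℝ)+1)^2 := by
          field_simp
  have hsummable : Summable (fun j : ℕ => 1/((j:ℝ)+1)^2) := by
    have h0 : Summable (fun n : ℕ => 1/(n:ℝ)^2) :=
      Real.summable_one_div_nat_pow.mpr one_lt_two
    have h1 := (summable_nat_add_iff 1).2 h0
    apply h1.congr
    intro n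
    push_cast
    ring
  have hsum : (∑' j, P (s j)) ≠ ⊤ := by
    apply ne_top_of_le_ne_top _ (ENNReal.tsum_le_tsum hb)
    rw [← ENNReal.ofReal_tsum_of_nonneg (fun j => by positivity) hsummable]
    exact ENNReal.ofReal_ne_top
  filter_upwards [MeasureTheory.ae_eventually_notMem hsum] with ω hω
  filter_upwards [hω] with j hj
  exact not_le.mp hj

private lemma tendsto_aux (h : ℕ) :
    Tendsto (fun n : ℕ =>
      8*((h:ℝ)+1) * (Real.log (Real.exp 1 * ((n:ℝ)+(h:ℝ)))^4 / (n:ℝ))) atTop (nhds 0) := by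
  have t1 : Tendsto (fun x : ℝ => Real.log x ^ 4 / ((Real.exp 1)⁻¹ * x + (-(h:ℝ))))
      atTop (nhds 0) :=
    Real.tendsto_pow_log_div_mul_add_atTop _ _ 4 (by positivity)
  have t2 : Tendsto (fun n : ℕ => Real.exp 1 * ((n:ℝ)+(h:ℝ))) atTop atTop := by
    apply Tendsto.const_mul_atTop (Real.exp_pos 1)
    exact tendsto_atTop_add_const_right _ _ tendsto_natCast_atTop_atTop
  have t3 := t1.comp t2
  have t4 : Tendsto (fun n : ℕ =>
      Real.log (Real.exp 1 * ((n:ℝ)+(h:ℝ)))^4 / (n:ℝ)) atTop (nhds 0) := by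
    apply t3.congr
    intro n
    simp only [Function.comp_apply]
    congr 1
    rw [← mul_assoc, inv_mul_cancel₀ (Real.exp_ne_zero 1), one_mul]
    ring
  have := t4.const_mul (8*((h:ℝ)+1))
  simpa using this

theorem stmt12 {Ω : Type*} [MeasurableSpace Ω] (P : Measure Ω) [IsProbabilityMeasure P]
    (χ : ℕ → Ω → Bool) (hmeas : ∀ n, Measurable (χ n))
    (hindep : iIndepFun χ P)
    (hp : ∀ n : ℕ, 1 ≤ n → P {ω | χ n ω = true} = ENNReal.ofReal (1 / n))
    (h : ℕ) :
    ∀ᵐ ω ∂P,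
      Filter.limsup (fun n : ℕ =>
        (((Finset.Icc 1 n).filter (fun k =>
          ∃ j, k ≤ j ∧ j ≤ k + h ∧ ∃ i, 1 ≤ i ∧ χ i ω = true ∧ i ≤ j ∧
            (j : ℝ) ≤ i + Real.log i)).card : ℝ) / n) Filter.atTop = 0 := by
  filter_upwards [bc_lemma P χ hmeas hp] with ω hω
  obtain ⟨J, hJ⟩ := eventually_atTop.1 hω
  have key : Tendsto (fun n : ℕ =>
      (((Finset.Icc 1 n).filter (fun k =>
        ∃ j, k ≤ j ∧ j ≤ k + h ∧ ∃ i, 1 ≤ i ∧ χ i ω = true ∧ i ≤ j ∧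
          (j : ℝ) ≤ i + Real.log i)).card : ℝ) / n) atTop (nhds 0) := by
    apply squeeze_zero' (g := fun n : ℕ =>
      8*((h:ℝ)+1) * (Real.log (Real.exp 1 * ((n:ℝ)+(h:ℝ)))^4 / (n:ℝ)))
    · filter_upwards with n
      positivity
    · filter_upwards [eventually_ge_atTop (max (2^J) 2)] with n hn
      have hn2 : 2 ≤ n := le_trans (le_max_right _ _) hn
      have hnJ : 2^J ≤ n := le_trans (le_max_left _ _) hn
      set m := n + h with hm
      have hm2 : 2 ≤ m := by omega
      set j := Nat.clog 2 m with hjdef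
      have hjJ : J ≤ j := by
        have := Nat.clog_mono_right 2 (le_trans hnJ (Nat.le_add_right n h))
        rwa [Nat.clog_pow 2 J one_lt_two] at this
      have hmj : m ≤ 2^j := Nat.le_pow_clog one_lt_two m
      have hS : mS χ m ω ≤ mS χ (2^j) ω :=
        Finset.card_le_card (Finset.filter_subset_filter _ (Finset.Icc_subset_Icc_right hmj))
      have hS3 : mS χ m ω ≤ (j+1)^3 := le_trans hS (le_of_lt (hJ j hjJ))
      have hnat : (((Finset.Icc 1 n).filter (fun k =>
          ∃ j, k ≤ j ∧ j ≤ k + h ∧ ∃ i, 1 ≤ i ∧ χ i ω = true ∧ i ≤ j ∧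
            (j : ℝ) ≤ i + Real.log i)).card)
          ≤ (j+1)^3 * (Nat.floor (Real.log ((m : ℕ) : ℝ)) + h + 1) :=
        le_trans (cover_bound χ h ω n) (Nat.mul_le_mul_right _ hS3)
      set a := Real.log ((m : ℕ) : ℝ) with hadef
      have ha0 : 0 ≤ a := Real.log_nonneg (by exact_mod_cast le_trans one_le_two hm2)
      have hj1 : 1 ≤ j := by
        have := Nat.clog_mono_right 2 hm2
        rwa [show Nat.clog 2 2 = 1 from by simpa using Nat.clog_pow 2 1 one_lt_two] at this
      have hjr : (j:ℝ) ≤ 2*a + 1 := by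
        have hpow := Nat.pow_pred_clog_lt_self one_lt_two (show 1 < m by omega)
        have hlt : ((j:ℝ) - 1) * Real.log 2 < a := by
          have hlog := Real.log_lt_log (by positivity)
            (show ((2:ℝ)^(j-1)) < (m:ℝ) by exact_mod_cast hpow)
          rw [Real.log_pow] at hlog
          rw [Nat.cast_sub hj1, Nat.cast_one] at hlog
          exact hlog
        have hl2 : (0.6931471803 : ℝ) < Real.log 2 := Real.log_two_gt_d9
        nlinarith [(by exact_mod_cast hj1 : (1:ℝ) ≤ (j:ℝ))]
      have hfloor : ((Nat.floor a : ℕ) : ℝ) ≤ a := Nat.floor_le ha0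
      have hcast : ((((Finset.Icc 1 n).filter (fun k =>
          ∃ j, k ≤ j ∧ j ≤ k + h ∧ ∃ i, 1 ≤ i ∧ χ i ω = true ∧ i ≤ j ∧
            (j : ℝ) ≤ i + Real.log i)).card : ℝ))
          ≤ ((j:ℝ)+1)^3 * (((Nat.floor a : ℕ):ℝ) + (h:ℝ) + 1) := by
        exact_mod_cast hnat
      have hmain : ((((Finset.Icc 1 n).filter (fun k =>
          ∃ j, k ≤ j ∧ j ≤ k + h ∧ ∃ i, 1 ≤ i ∧ χ i ω = true ∧ i ≤ j ∧
            (j : ℝ) ≤ i + Real.log i)).card : ℝ))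
          ≤ 8*((h:ℝ)+1)*(a+1)^4 := by
        calc _ ≤ ((j:ℝ)+1)^3 * (((Nat.floor a : ℕ):ℝ) + (h:ℝ) + 1) := hcast
          _ ≤ ((2*a+1)+1)^3 * (a + (h:ℝ) + 1) := by
              gcongr
          _ = 8*(a+1)^3*(a + (h:ℝ) + 1) := by ring
          _ ≤ 8*(a+1)^3*(((h:ℝ)+1)*(a+1)) := by
              have hq : a + (h:ℝ) + 1 ≤ ((h:ℝ)+1)*(a+1) := by nlinarith [(Nat.cast_nonneg h : (0:ℝ) ≤ (h:ℝ))]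
              have : (0:ℝ) ≤ 8*(a+1)^3 := by positivity
              nlinarith
          _ = 8*((h:ℝ)+1)*(a+1)^4 := by ring
      have hlogeq : a + 1 = Real.log (Real.exp 1 * ((n:ℝ)+(h:ℝ))) := by
        rw [Real.log_mul (Real.exp_ne_zero 1) (by positivity), Real.log_exp, hadef, hm]
        push_cast
        ring
      have hnpos : (0:ℝ) < (n:ℝ) := by
        have : 0 < n := by omega
        exact_mod_cast this
      rw [← mul_div_assoc]
      rw [div_le_div_iff₀ hnpos hnpos]
      have hfinal : ((((Finset.Icc 1 n).filter (fun k =>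
          ∃ j, k ≤ j ∧ j ≤ k + h ∧ ∃ i, 1 ≤ i ∧ χ i ω = true ∧ i ≤ j ∧
            (j : ℝ) ≤ i + Real.log i)).card : ℝ))
          ≤ 8*((h:ℝ)+1) * Real.log (Real.exp 1 * ((n:ℝ)+(h:ℝ)))^4 := by
        rw [← hlogeq]
        exact hmain
      nlinarith [hnpos, hfinal]
    · exact tendsto_aux h
  exact key.limsup_eq
end

section
/- Let γ be a regular discount function and suppose |V1 − V2| > ε where V1 = (1/Γ_t)∑_{k=t}^∞ γ_k r_k and V2 = (1/Γ_t)∑_{k=t}^∞ γ_k r'_k with r_k, r'_k ∈ [0,1]. Then there exists k ∈ [t, t + H_t(1−ε)] with r_k ≠ r'_k. -/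
open Filter Finset

theorem stmt18 (γ : ℕ → ℝ) (hpos : ∀ k, 0 ≤ γ k) (hsum : Summable γ)
    (hΓ : ∀ s, 0 < ∑' i : ℕ, γ (s + i))
    (t : ℕ) (ε : ℝ) (hε0 : 0 < ε) (hε1 : ε < 1)
    (r r' : ℕ → ℝ)
    (hr : ∀ k, r k ∈ Set.Icc (0 : ℝ) 1) (hr' : ∀ k, r' k ∈ Set.Icc (0 : ℝ) 1)
    (hdiff : ε < |(∑' k : ℕ, γ (t + k) * r (t + k)) / (∑' i : ℕ, γ (t + i)) -
      (∑' k : ℕ, γ (t + k) * r' (t + k)) / (∑' i : ℕ, γ (t + i))|) :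
    ∃ k, t ≤ k ∧ k ≤ t + horizon γ t (1 - ε) ∧ r k ≠ r' k := by
  by_contra hcon
  push_neg at hcon
  set Γ : ℝ := ∑' i : ℕ, γ (t + i) with hΓdef
  have hΓt : 0 < Γ := hΓ t
  have hsγ : Summable (fun i => γ (t + i)) := by
    have := (summable_nat_add_iff t).2 hsum
    simpa [add_comm] using this
  have hS : ∀ h : ℕ, (∑ k ∈ Finset.Icc t (t + h), γ k)
      = ∑ i ∈ Finset.range (h + 1), γ (t + i) := by
    intro h
    rw [← Finset.Ico_add_one_right_eq_Icc, Finset.sum_Ico_eq_sum_range]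
    have : t + h + 1 - t = h + 1 := by omega
    rw [this]
  -- nonemptiness of the horizon set
  have htend : Tendsto (fun h : ℕ => (∑ i ∈ Finset.range (h + 1), γ (t + i)) / Γ)
      atTop (nhds (Γ / Γ)) :=
    (hsγ.hasSum.tendsto_sum_nat.comp (tendsto_add_atTop_nat 1)).div_const Γ
  rw [div_self hΓt.ne'] at htend
  have hevent : ∀ᶠ h : ℕ in atTop,
      (1 - ε) < (∑ k ∈ Finset.Icc t (t + h), γ k) / Γ := by
    filter_upwards [htend.eventually_const_lt (by linarith : (1 : ℝ) - ε < 1)] with h hh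
    rw [hS h]; exact hh
  have hne : {h : ℕ | (1 - ε) < (∑ k ∈ Finset.Icc t (t + h), γ k) / Γ}.Nonempty :=
    hevent.exists
  set H := horizon γ t (1 - ε) with hH
  have hHmem : (1 - ε) < (∑ k ∈ Finset.Icc t (t + H), γ k) / Γ := Nat.sInf_mem hne
  have hSH : (1 - ε) * Γ < ∑ i ∈ Finset.range (H + 1), γ (t + i) := by
    rw [← hS H]
    exact (lt_div_iff₀ hΓt).1 hHmem
  -- rewards agree up to H
  have hagree : ∀ i ≤ H, r (t + i) = r' (t + i) := fun i hi =>
    hcon (t + i) (Nat.le_add_right t i) (by omega)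
  -- summability facts
  have habs : ∀ i, |γ (t + i) * r (t + i) - γ (t + i) * r' (t + i)| ≤ γ (t + i) := by
    intro i
    rw [← mul_sub, abs_mul, abs_of_nonneg (hpos _)]
    have h1 := (hr (t + i)).1; have h2 := (hr (t + i)).2
    have h3 := (hr' (t + i)).1; have h4 := (hr' (t + i)).2
    have hd : |r (t + i) - r' (t + i)| ≤ 1 := abs_le.2 ⟨by linarith, by linarith⟩
    exact mul_le_of_le_one_right (hpos _) hd
  have hsf : Summable (fun i => γ (t + i) * r (t + i)) := by
    apply hsγ.of_norm_bounded
    intro i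
    rw [Real.norm_eq_abs, abs_mul, abs_of_nonneg (hpos _)]
    have h1 := (hr (t + i)).1; have h2 := (hr (t + i)).2
    rw [abs_of_nonneg h1]
    nlinarith [hpos (t + i)]
  have hsg : Summable (fun i => γ (t + i) * r' (t + i)) := by
    apply hsγ.of_norm_bounded
    intro i
    rw [Real.norm_eq_abs, abs_mul, abs_of_nonneg (hpos _)]
    have h1 := (hr' (t + i)).1; have h2 := (hr' (t + i)).2
    rw [abs_of_nonneg h1]
    nlinarith [hpos (t + i)]
  set c : ℕ → ℝ := fun i => if i < H + 1 then 0 else γ (t + i) with hc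
  have hsc : Summable c := by
    apply hsγ.of_norm_bounded
    intro i
    rw [Real.norm_eq_abs, hc]
    by_cases hi : i < H + 1 <;> simp [hi, abs_of_nonneg (hpos _), hpos _]
  have hptw : ∀ i, |γ (t + i) * r (t + i) - γ (t + i) * r' (t + i)| ≤ c i := by
    intro i
    by_cases hi : i < H + 1
    · rw [hagree i (by omega)]
      simp [hc, show i ≤ H by omega]
    · simpa [hc, show ¬ i ≤ H by omega] using habs i
  have hdsum : Summable (fun i => γ (t + i) * r (t + i) - γ (t + i) * r' (t + i)) :=
    hsf.sub hsg
  have hnorm : Summable (fun i => ‖γ (t + i) * r (t + i) - γ (t + i) * r' (t + i)‖) := by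
    simpa only [Real.norm_eq_abs] using hdsum.abs
  have hbound1 : |∑' i, (γ (t + i) * r (t + i) - γ (t + i) * r' (t + i))| ≤ ∑' i, c i := by
    calc |∑' i, (γ (t + i) * r (t + i) - γ (t + i) * r' (t + i))|
        = ‖∑' i, (γ (t + i) * r (t + i) - γ (t + i) * r' (t + i))‖ :=
          (Real.norm_eq_abs _).symm
      _ ≤ ∑' i, ‖γ (t + i) * r (t + i) - γ (t + i) * r' (t + i)‖ :=
          norm_tsum_le_tsum_norm hnorm
      _ = ∑' i, |γ (t + i) * r (t + i) - γ (t + i) * r' (t + i)| := by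
          simp only [Real.norm_eq_abs]
      _ ≤ ∑' i, c i := Summable.tsum_le_tsum hptw hdsum.abs hsc
  have hctail : ∑' i, c i = Γ - ∑ i ∈ Finset.range (H + 1), γ (t + i) := by
    have e1 := Summable.sum_add_tsum_nat_add (f := c) (H + 1) hsc
    have e2 := Summable.sum_add_tsum_nat_add (f := fun i => γ (t + i)) (H + 1) hsγ
    have e3 : ∑ i ∈ Finset.range (H + 1), c i = 0 := by
      apply Finset.sum_eq_zero
      intro i hi
      simp [hc, show i ≤ H by have := Finset.mem_range.1 hi; omega]
    have e4 : (fun i => c (i + (H + 1))) = fun i => γ (t + (i + (H + 1))) := by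
      funext i; simp [hc, show ¬ i + (H + 1) ≤ H by omega]
    rw [e3, e4] at e1
    simp only [← hΓdef] at e2
    linarith [e1, e2]
  have hctailε : ∑' i, c i < ε * Γ := by
    rw [hctail]; nlinarith
  -- conclude
  have hdiff2 : |(∑' k : ℕ, γ (t + k) * r (t + k)) / Γ -
      (∑' k : ℕ, γ (t + k) * r' (t + k)) / Γ| < ε := by
    rw [div_sub_div_same, abs_div, abs_of_pos hΓt, div_lt_iff₀ hΓt,
      ← Summable.tsum_sub hsf hsg]
    calc |∑' i, (γ (t + i) * r (t + i) - γ (t + i) * r' (t + i))|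
        ≤ ∑' i, c i := hbound1
      _ < ε * Γ := hctailε
  exact absurd hdiff (not_lt.2 hdiff2.le)
end
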